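/- Suppose 𝓕 is a system of local filters on λ, H ⊆ Q*_λ(𝓕) is ≤*-directed, fil(H) is an ultrafilter on λ, and ⟨δ_ξ : ξ < λ⟩ is an increasing continuous sequence of ordinals below λ with δ₀ = 0 such that for every club C ⊆ λ one has ∪{[δ_ξ, δ_{ξ+1}) : ξ ∈ C} ∈ fil(H). For p ∈ H and a club C of λ put S(p,C) = {ξ ∈ C : there is (α,Z,F) ∈ p with [δ_ξ, δ_{ξ+1}) ∩ Z ∈ F⁺}. Then for every A ⊆ λ there are p ∈ H and a club C ⊆ λ such that either S(p,C) ⊆ A or S(p,C) ⊆ λ ∖ A. -/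

import Mathlib

namespace RS889

noncomputable section

open Cardinal Set

universe u v

/-- `F` is a (proper) filter on the set `Z`, presented as the family of its members. -/
def IsFilterOn {α : Type u} (F : Set (Set α)) (Z : Set α) : Prop :=
  (∀ A ∈ F, A ⊆ Z) ∧ Z ∈ F ∧
    (∀ A ∈ F, ∀ B, A ⊆ B → B ⊆ Z → B ∈ F) ∧
    (∀ A ∈ F, ∀ B ∈ F, A ∩ B ∈ F) ∧ ∅ ∉ F

/-- The family `F⁺` of `F`-positive subsets of `Z`. -/
def posOf {α : Type u} (F : Set (Set α)) (Z : Set α) : Set (Set α) :=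
  {B | B ⊆ Z ∧ ∀ C ∈ F, (B ∩ C).Nonempty}

/-- `F` is an ultrafilter on the set `Z`. -/
def IsUltraOn {α : Type u} (F : Set (Set α)) (Z : Set α) : Prop :=
  IsFilterOn F Z ∧ ∀ A ⊆ Z, A ∈ F ∨ Z \ A ∈ F

/-- An unultra filter: every positive set splits into two positive pieces. -/
def Unultra {α : Type u} (F : Set (Set α)) (Z : Set α) : Prop :=
  ∀ A ∈ posOf F Z, ∃ B ⊆ A, B ∈ posOf F Z ∧ A \ B ∈ posOf F Z

/-- The sum `⊕^E_{x ∈ X} Fx x` of the filters `Fx x` on the sets `Z x` over a filter `E` on `X`. -/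
def filSum {α : Type u} {β : Type v} (X : Set α) (E : Set (Set α))
    (Z : α → Set β) (Fx : α → Set (Set β)) : Set (Set β) :=
  {A | A ⊆ (⋃ x ∈ X, Z x) ∧ {x | x ∈ X ∧ Z x ∩ A ∈ Fx x} ∈ E}

/-- The sum `⊕_{ζ<ξ} F ζ` over the filter of co-bounded subsets of `ξ`. -/
def cobddSum {α : Type u} (ξ : Ordinal.{0}) (Z : Ordinal.{0} → Set α)
    (F : Ordinal.{0} → Set (Set α)) : Set (Set α) :=
  {A | A ⊆ (⋃ ζ ∈ Set.Iio ξ, Z ζ) ∧ ∃ β < ξ, ∀ ζ, β ≤ ζ → ζ < ξ → Z ζ ∩ A ∈ F ζ}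

/-- A triple `(α, Z, F)`: an ordinal, a set of ordinals and a family of subsets of `Z`
(intended to be a filter on `Z`). -/
structure LocalFilter : Type 1 where
  a : Ordinal.{0}
  Z : Set Ordinal.{0}
  F : Set (Set Ordinal.{0})

/-- A system of local filters on `lam`. -/
def IsLFS (lam : Cardinal.{0}) (S : Set LocalFilter) : Prop :=
  (∀ t ∈ S, t.Z ⊆ Set.Iio lam.ord ∧ #t.Z < Cardinal.lift.{1} lam ∧
      IsLeast t.Z t.a ∧ IsFilterOn t.F t.Z) ∧
    ∀ β < lam.ord, ∃ t ∈ S, β ≤ t.a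

/-- The family `Q*_lam(S)`. -/
def Qstar (lam : Cardinal.{0}) (S : Set LocalFilter) : Set (Set LocalFilter) :=
  {r | r ⊆ S ∧ #r = Cardinal.lift.{1} lam ∧
    ∀ ξ : Ordinal.{0}, #{t | t ∈ r ∧ t.a = ξ} < Cardinal.lift.{1} lam}

/-- The filter `fil(r)` on `lam` generated by `r`. -/
def fil (lam : Cardinal.{0}) (r : Set LocalFilter) : Set (Set Ordinal.{0}) :=
  {A | A ⊆ Set.Iio lam.ord ∧ ∃ ε < lam.ord, ∀ t ∈ r, ε ≤ t.a → A ∩ t.Z ∈ t.F}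

/-- `r` is strongly disjoint. -/
def StronglyDisjoint (r : Set LocalFilter) : Prop :=
  (∀ s ∈ r, ∀ t ∈ r, s.a = t.a → s = t) ∧
    ∀ s ∈ r, ∀ t ∈ r, s.a < t.a → s.Z ⊆ Set.Iio t.a

/-- The family `Q⁰_lam(S)` of strongly disjoint members of `Q*_lam(S)`. -/
def Qzero (lam : Cardinal.{0}) (S : Set LocalFilter) : Set (Set LocalFilter) :=
  {r | r ∈ Qstar lam S ∧ StronglyDisjoint r}

/-- `fil(H) = ⋃ { fil(r) : r ∈ H }`. -/
def filH (lam : Cardinal.{0}) (H : Set (Set LocalFilter)) : Set (Set Ordinal.{0}) :=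
  {A | ∃ r ∈ H, A ∈ fil lam r}

/-- A uniform family of subsets of `lam`: every member has cardinality `lam`. -/
def IsUniform (lam : Cardinal.{0}) (D : Set (Set Ordinal.{0})) : Prop :=
  ∀ A ∈ D, #A = Cardinal.lift.{1} lam

/-- `C` is a club (closed unbounded) subset of `lam`. -/
def IsClub (lam : Cardinal.{0}) (C : Set Ordinal.{0}) : Prop :=
  C ⊆ Set.Iio lam.ord ∧ (∀ β < lam.ord, ∃ γ ∈ C, β < γ) ∧
    ∀ δ, δ < lam.ord → δ ≠ 0 → (∀ β < δ, ∃ γ ∈ C, β < γ ∧ γ < δ) → δ ∈ C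

/-- `St` is stationary in `lam`. -/
def IsStationary (lam : Cardinal.{0}) (St : Set Ordinal.{0}) : Prop :=
  ∀ C, IsClub lam C → (St ∩ C).Nonempty

/-- `D` is a weakly reasonable (ultra)filter on `lam`. -/
def WeaklyReasonable (lam : Cardinal.{0}) (D : Set (Set Ordinal.{0})) : Prop :=
  ∀ f : Ordinal.{0} → Ordinal.{0},
    (∀ δ < lam.ord, f δ < lam.ord) →
    (∀ δ δ', δ ≤ δ' → δ' < lam.ord → f δ ≤ f δ') →
    (∀ β < lam.ord, ∃ δ < lam.ord, β ≤ f δ) →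
    ∃ C, IsClub lam C ∧ (⋃ δ ∈ C, Set.Ico δ (δ + f δ)) ∉ D

/-- `e` is the increasing enumeration of `C ∪ {0}` (in order type `lam`). -/
def IsEnum (lam : Cardinal.{0}) (C : Set Ordinal.{0}) (e : Ordinal.{0} → Ordinal.{0}) : Prop :=
  (∀ ξ η, ξ < η → η < lam.ord → e ξ < e η) ∧
    (∀ ξ < lam.ord, e ξ ∈ insert 0 C) ∧
    ∀ γ ∈ insert 0 C, ∃ ξ < lam.ord, e ξ = γ

/-- The quotient `D/C`, where `e` is the increasing enumeration of `C ∪ {0}`. -/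
def quotFil (lam : Cardinal.{0}) (D : Set (Set Ordinal.{0})) (e : Ordinal.{0} → Ordinal.{0}) :
    Set (Set Ordinal.{0}) :=
  {A | A ⊆ Set.Iio lam.ord ∧ (⋃ ξ ∈ A, Set.Ico (e ξ) (e (ξ + 1))) ∈ D}

/-- `d` is an increasing continuous sequence of ordinals below `lam` (indexed by `ξ < lam`). -/
def IncrCont (lam : Cardinal.{0}) (d : Ordinal.{0} → Ordinal.{0}) : Prop :=
  (∀ ξ < lam.ord, d ξ < lam.ord) ∧
    (∀ ξ η, ξ < η → η < lam.ord → d ξ < d η) ∧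
    ∀ δ, δ < lam.ord → Order.IsSuccLimit δ → ∀ β < d δ, ∃ ξ < δ, β ≤ d ξ

/-- The full system `𝓕^ult` of local non-principal ultrafilters on `lam`. -/
def Fult (lam : Cardinal.{0}) : Set LocalFilter :=
  {t | t.a < lam.ord ∧ t.a ∈ t.Z ∧ t.Z ⊆ {o | t.a ≤ o ∧ o < lam.ord} ∧
      t.Z.Infinite ∧ #t.Z < Cardinal.lift.{1} lam ∧ IsUltraOn t.F t.Z ∧
      ∀ x : Ordinal.{0}, ({x} : Set Ordinal.{0}) ∉ t.F}

/-- `Σ(p)`. -/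
def SigmaP (lam : Cardinal.{0}) (p : Set LocalFilter) : Set LocalFilter :=
  {t | t ∈ Fult lam ∧ ∀ A ∈ t.F, ∃ s ∈ p, A ∩ s.Z ∈ s.F}

/-- A linked family `H ⊆ Q*_lam`. -/
def Linked (lam : Cardinal.{0}) (H : Set (Set LocalFilter)) : Prop :=
  H.Nonempty ∧ ∀ S : Set (Set LocalFilter), S ⊆ H → S.Finite → S.Nonempty →
    #{α : Ordinal.{0} | ∃ t : LocalFilter, t.a = α ∧ ∀ p ∈ S, t ∈ SigmaP lam p} =
      Cardinal.lift.{1} lam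

/-- A big family `H ⊆ Q*_lam`. -/
def Big (lam : Cardinal.{0}) (H : Set (Set LocalFilter)) : Prop :=
  H.Nonempty ∧ ∀ D ⊆ Fult lam, ∃ q ∈ H, q ⊆ D ∨ q ∩ D = ∅

/-- The condition `(⊕)^sum_S`. -/
def SumCond (lam : Cardinal.{0}) (S : Set LocalFilter) : Prop :=
  ∀ κ : Cardinal.{0}, ℵ₀ ≤ κ → κ < lam →
    ∀ t : Ordinal.{0} → LocalFilter,
      (∀ ξ < κ.ord, t ξ ∈ S) →
      (∀ ξ ζ, ξ < ζ → ζ < κ.ord → (t ξ).Z ⊆ Set.Iio (t ζ).a) →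
      ∃ E : Set (Set Ordinal.{0}), IsFilterOn E (Set.Iio κ.ord) ∧
        (∀ A ∈ E, #A = Cardinal.lift.{1} κ) ∧
        (LocalFilter.mk (t 0).a (⋃ ξ ∈ Set.Iio κ.ord, (t ξ).Z)
          (filSum (Set.Iio κ.ord) E (fun ξ => (t ξ).Z) (fun ξ => (t ξ).F))) ∈ S

/-- `(<lam⁺)`-completeness of a subfamily `Q` of `Q*` with respect to `≤*`. -/
def Complete (lam : Cardinal.{0}) (Q : Set (Set LocalFilter)) : Prop :=
  ∀ γ : Ordinal.{0}, γ.card ≤ lam →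
    ∀ p : Ordinal.{0} → Set LocalFilter,
      (∀ ξ < γ, p ξ ∈ Q) →
      (∀ ξ ζ, ξ ≤ ζ → ζ < γ → fil lam (p ξ) ⊆ fil lam (p ζ)) →
      ∃ q ∈ Q, ∀ ξ < γ, fil lam (p ξ) ⊆ fil lam q

/-- The full system `𝓕₀` of co-bounded filters on `lam`. -/
def Fcobdd (lam : Cardinal.{0}) : Set LocalFilter :=
  {t | t.a ∈ t.Z ∧ t.Z ⊆ {o | t.a ≤ o ∧ o < lam.ord} ∧
      #t.Z < Cardinal.lift.{1} lam ∧ sSup t.Z ∉ t.Z ∧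
      t.F = {A | A ⊆ t.Z ∧ ∃ β < sSup t.Z, ∀ x ∈ t.Z, β ≤ x → x ∈ A}}

/-- The `Ē`-closure of a system `S` of local filters (as an inductive family:
it is closed under `E κ`-sums of `κ`-sequences of previously obtained triples). -/
inductive EClos (lam : Cardinal.{0}) (E : Cardinal.{0} → Set (Set Ordinal.{0}))
    (S : Set LocalFilter) : LocalFilter → Prop
  | base : ∀ t ∈ S, EClos lam E S t
  | sum : ∀ κ : Cardinal.{0}, ℵ₀ ≤ κ → κ < lam →
      ∀ t : Ordinal.{0} → LocalFilter,
        (∀ ξ < κ.ord, EClos lam E S (t ξ)) →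
        (∀ ξ ζ, ξ < ζ → ζ < κ.ord → (t ξ).Z ⊆ Set.Iio (t ζ).a) →
        EClos lam E S (LocalFilter.mk (t 0).a (⋃ ξ ∈ Set.Iio κ.ord, (t ξ).Z)
          (filSum (Set.Iio κ.ord) (E κ) (fun ξ => (t ξ).Z) (fun ξ => (t ξ).F)))

/-- The full system `𝓕^unu` of local unultra filters on `lam`. -/
def Funu (lam : Cardinal.{0}) : Set LocalFilter :=
  {t | t.Z.Nonempty ∧ t.Z ⊆ Set.Iio lam.ord ∧ #t.Z < Cardinal.lift.{1} lam ∧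
      IsLeast t.Z t.a ∧ IsFilterOn t.F t.Z ∧ Unultra t.F t.Z}

/-- A pararegularity system for `F` (on `Z`), indexed by finite subsets of `κ`. -/
def PRSystem (κ : Cardinal.{0}) (F : Set (Set Ordinal.{0})) (Z : Set Ordinal.{0}) : Prop :=
  ∃ A : Finset Ordinal.{0} → Set Ordinal.{0},
    (∀ u : Finset Ordinal.{0}, ↑u ⊆ Set.Iio κ.ord → A u ∈ F) ∧
    (∀ u v : Finset Ordinal.{0}, ↑v ⊆ Set.Iio κ.ord → u ⊆ v → A v ⊆ A u) ∧
    (∀ U : Set Ordinal.{0}, U ⊆ Set.Iio κ.ord → U.Infinite →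
      (⋂ ξ ∈ U, A {ξ}) = ∅) ∧
    F = {B | B ⊆ Z ∧ ∃ u : Finset Ordinal.{0}, ↑u ⊆ Set.Iio κ.ord ∧ A u ⊆ B}

/-- `F` is a pararegular filter on `Z` (with `α = min Z`). -/
def Pararegular (lam : Cardinal.{0}) (F : Set (Set Ordinal.{0})) (Z : Set Ordinal.{0})
    (α : Ordinal.{0}) : Prop :=
  ∃ κ : Cardinal.{0}, (Ordinal.omega0 + α).card ≤ κ ∧ κ < lam ∧ PRSystem κ F Z

/-- `F` is a strongly pararegular filter on `Z` (with `α = min Z`). -/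
def StronglyPararegular (lam : Cardinal.{0}) (F : Set (Set Ordinal.{0})) (Z : Set Ordinal.{0})
    (α : Ordinal.{0}) : Prop :=
  ∃ κ : Cardinal.{0}, 2 ^ (Ordinal.omega0 + α).card ≤ κ ∧ κ < lam ∧ PRSystem κ F Z

/-- The full system `𝓕^pr` of local pararegular filters on `lam`. -/
def Fpr (lam : Cardinal.{0}) : Set LocalFilter :=
  {t | t.Z.Infinite ∧ t.Z ⊆ Set.Iio lam.ord ∧ #t.Z < Cardinal.lift.{1} lam ∧
      IsLeast t.Z t.a ∧ IsFilterOn t.F t.Z ∧ Pararegular lam t.F t.Z t.a}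

/-- The full system `𝓕^spr` of local strongly pararegular filters on `lam`. -/
def Fspr (lam : Cardinal.{0}) : Set LocalFilter :=
  {t | t.Z.Infinite ∧ t.Z ⊆ Set.Iio lam.ord ∧ #t.Z < Cardinal.lift.{1} lam ∧
      IsLeast t.Z t.a ∧ IsFilterOn t.F t.Z ∧ StronglyPararegular lam t.F t.Z t.a}

/-- The space `^lam lam`. -/
def Fn (lam : Cardinal.{0}) : Type 1 := ↥(Set.Iio lam.ord) → ↥(Set.Iio lam.ord)

/-- The basic open set `O_s` determined by a partial function `s` of length `γ`. -/
def basicOpen (lam : Cardinal.{0}) (γ : Ordinal.{0}) (s : Ordinal.{0} → Ordinal.{0}) : Set (Fn lam) :=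
  {f | ∀ ξ : ↥(Set.Iio lam.ord), (ξ : Ordinal.{0}) < γ → ((f ξ : Ordinal.{0}) = s ξ)}

/-- `X ⊆ ^lam lam` is nowhere dense. -/
def NwDense (lam : Cardinal.{0}) (X : Set (Fn lam)) : Prop :=
  ∀ γ < lam.ord, ∀ s : Ordinal.{0} → Ordinal.{0}, (∀ ξ < γ, s ξ < lam.ord) →
    ∃ γ', γ ≤ γ' ∧ γ' < lam.ord ∧ ∃ s' : Ordinal.{0} → Ordinal.{0},
      (∀ ξ < γ', s' ξ < lam.ord) ∧ (∀ ξ < γ, s' ξ = s ξ) ∧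
      basicOpen lam γ' s' ∩ X = ∅

/-- `X` belongs to the ideal `M^lam_{lam,lam}`: it is covered by `lam` many
nowhere dense sets. -/
def MeagerSet (lam : Cardinal.{0}) (X : Set (Fn lam)) : Prop :=
  ∃ A : Ordinal.{0} → Set (Fn lam), (∀ ξ < lam.ord, NwDense lam (A ξ)) ∧
    X ⊆ ⋃ ξ ∈ Set.Iio lam.ord, A ξ

/-- `cov(M^lam_{lam,lam})`. -/
def covM (lam : Cardinal.{0}) : Cardinal.{1} :=
  sInf {c | ∃ 𝓐 : Set (Set (Fn lam)), (∀ X ∈ 𝓐, MeagerSet lam X) ∧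
    ⋃₀ 𝓐 = Set.univ ∧ #𝓐 = c}

/-- Nodes of trees of sequences of ordinals: a pair (level, function). -/
abbrev TNode : Type 1 := Ordinal.{0} × (Ordinal.{0} → Ordinal.{0})

/-- Truncation of a function below `γ` (with value `0` elsewhere). -/
def truncF (γ : Ordinal.{0}) (f : Ordinal.{0} → Ordinal.{0}) : Ordinal.{0} → Ordinal.{0} :=
  fun ξ => if ξ < γ then f ξ else 0

/-- `T` is a tree of height `lam` of (normalized) sequences of ordinals `< lam`. -/
def IsTree (lam : Cardinal.{0}) (T : Set TNode) : Prop :=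
  (∀ x ∈ T, x.1 < lam.ord ∧ (∀ ξ < x.1, x.2 ξ < lam.ord) ∧ x.2 = truncF x.1 x.2) ∧
    ∀ x ∈ T, ∀ γ ≤ x.1, (γ, truncF γ x.2) ∈ T

/-- The `γ`-th level of `T`. -/
def treeLevel (T : Set TNode) (γ : Ordinal.{0}) : Set TNode := {x | x ∈ T ∧ x.1 = γ}

/-- `T` is a `lam`-Kurepa tree: a tree of height `lam` all of whose levels are
nonempty of cardinality `< lam`. -/
def IsKurepaTree (lam : Cardinal.{0}) (T : Set TNode) : Prop :=
  IsTree lam T ∧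
    ∀ γ < lam.ord, (treeLevel T γ).Nonempty ∧
      #(treeLevel T γ) < Cardinal.lift.{1} lam

/-- The set of `lam`-branches of `T` (normalized functions all of whose proper
initial segments lie in `T`). -/
def branches (lam : Cardinal.{0}) (T : Set TNode) : Set (Ordinal.{0} → Ordinal.{0}) :=
  {f | f = truncF lam.ord f ∧ ∀ γ < lam.ord, (γ, truncF γ f) ∈ T}


-- auxiliary lemmas

private lemma aux_le_d {lam : Cardinal.{0}} {d : Ordinal.{0} → Ordinal.{0}}
    (hd : IncrCont lam d) : ∀ ξ < lam.ord, ξ ≤ d ξ := by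
  intro ξ
  induction ξ using Ordinal.induction with
  | h ξ IH =>
    intro hξ
    by_contra h
    push_neg at h
    exact ((IH (d ξ) h (hd.1 ξ hξ)).trans_lt (hd.2.1 (d ξ) ξ h hξ)).false

private lemma aux_inj {lam : Cardinal.{0}} {d : Ordinal.{0} → Ordinal.{0}}
    (hd : IncrCont lam d) {ξ η x : Ordinal.{0}}
    (hξ : ξ < lam.ord) (hη : η < lam.ord)
    (h1 : x ∈ Set.Ico (d ξ) (d (ξ + 1))) (h2 : x ∈ Set.Ico (d η) (d (η + 1))) : ξ = η := by
  have key : ∀ ζ θ : Ordinal.{0}, ζ < θ → θ < lam.ord →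
      x ∈ Set.Ico (d ζ) (d (ζ + 1)) → x ∈ Set.Ico (d θ) (d (θ + 1)) → False := by
    intro ζ θ hlt hθ hz ht
    have hle : d (ζ + 1) ≤ d θ := by
      have h' : ζ + 1 ≤ θ := by
        rw [Ordinal.add_one_eq_succ]; exact Order.succ_le_of_lt hlt
      rcases h'.lt_or_eq with h'' | h''
      · exact (hd.2.1 _ _ h'' hθ).le
      · rw [h'']
    exact absurd (hz.2.trans_le (hle.trans ht.1)) (lt_irrefl x)
  rcases lt_trichotomy ξ η with h | h | h
  · exact absurd (key ξ η h hη h1 h2) not_false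
  · exact h
  · exact absurd (key η ξ h hξ h2 h1) not_false

private lemma aux_bdd {lam : Cardinal.{0}} (hreg : lam.IsRegular) (hunc : ℵ₀ < lam)
    (s : Set Ordinal.{0}) (hcard : #s < Cardinal.lift.{1} lam) (hsub : s ⊆ Set.Iio lam.ord) :
    ∃ β < lam.ord, ∀ a ∈ s, a < β := by
  obtain ⟨c, hc, hclt⟩ := Cardinal.lt_lift_iff.mp hcard
  have he : Nonempty (c.out ≃ ↥s) := by
    rw [← Cardinal.lift_mk_eq']
    simp [Cardinal.mk_out, hclt]
  obtain ⟨e⟩ := he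
  set f : c.out → Ordinal.{0} := fun i => (e i : Ordinal) with hf
  have hsup : iSup f < lam.ord := by
    apply Ordinal.iSup_lt_ord
    · rw [Cardinal.mk_out, hreg.cof_eq]; exact hc
    · intro i; exact hsub (e i).2
  refine ⟨iSup f + 1, ?_, ?_⟩
  · rw [Ordinal.add_one_eq_succ]
    exact (Cardinal.isSuccLimit_ord hunc.le).succ_lt hsup
  · intro a ha
    have h1 : a ≤ iSup f := by
      have := le_ciSup (Ordinal.bddAbove_range f) (e.symm ⟨a, ha⟩)
      simpa [hf] using this
    rw [Ordinal.add_one_eq_succ]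
    exact h1.trans_lt (Order.lt_succ _)

private lemma aux_regl {lam : Cardinal.{0}} (hreg : lam.IsRegular) :
    (Cardinal.lift.{1} lam).IsRegular := by
  constructor
  · simpa using Cardinal.lift_le.{1}.mpr hreg.1
  · rw [← Cardinal.lift_ord, ← Ordinal.lift_cof]
    exact Cardinal.lift_le.mpr hreg.2

private lemma aux_bad {lam : Cardinal.{0}} (hreg : lam.IsRegular) (hunc : ℵ₀ < lam)
    {F : Set LocalFilter} (hF : IsLFS lam F) {p : Set LocalFilter} (hp : p ∈ Qstar lam F)
    {ε : Ordinal.{0}} (hε : ε < lam.ord) :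
    ∃ β < lam.ord, ∀ t ∈ p, t.a < ε → t.Z ⊆ Set.Iio β := by
  have hregl := aux_regl hreg
  set bad : Set LocalFilter := {t | t ∈ p ∧ t.a < ε} with hbaddef
  have hbadsub : bad ⊆ ⋃ ξ ∈ Set.Iio ε, {t | t ∈ p ∧ t.a = ξ} := by
    intro t ht
    exact Set.mem_biUnion ht.2 ⟨ht.1, rfl⟩
  have hIio : #(Set.Iio ε) < Cardinal.lift.{1} lam := by
    rw [Ordinal.mk_Iio_ordinal]
    exact Cardinal.lift_lt.mpr (Cardinal.lt_ord.mp hε)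
  have hbadcard : #bad < Cardinal.lift.{1} lam := by
    refine lt_of_le_of_lt
      ((Cardinal.mk_le_mk_of_subset hbadsub).trans (Cardinal.mk_biUnion_le _ _)) ?_
    refine Cardinal.mul_lt_of_lt hregl.1 hIio ?_
    refine Cardinal.iSup_lt_lift_of_isRegular.{1,0} hregl (by simpa using hIio) ?_
    intro i; exact hp.2.2 i
  have hZcard : #(⋃ t ∈ bad, t.Z) < Cardinal.lift.{1} lam := by
    refine lt_of_le_of_lt (Cardinal.mk_biUnion_le _ _) ?_
    refine Cardinal.mul_lt_of_lt hregl.1 hbadcard ?_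
    refine Cardinal.iSup_lt_lift_of_isRegular.{1,0} hregl (by simpa using hbadcard) ?_
    intro t; exact (hF.1 t.1 (hp.1 t.2.1)).2.1
  have hZsub : (⋃ t ∈ bad, t.Z) ⊆ Set.Iio lam.ord := by
    intro x hx
    obtain ⟨t, ht, hxt⟩ := Set.mem_iUnion₂.mp hx
    exact (hF.1 t (hp.1 ht.1)).1 hxt
  obtain ⟨β, hβ, hb⟩ := aux_bdd hreg hunc _ hZcard hZsub
  exact ⟨β, hβ, fun t ht hta x hx => hb x (Set.mem_biUnion (⟨ht, hta⟩ : t ∈ bad) hx)⟩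

private lemma aux_club {lam : Cardinal.{0}} (hunc : ℵ₀ < lam) {β : Ordinal.{0}}
    (hβ : β < lam.ord) : IsClub lam (Set.Ioo β lam.ord) := by
  have hlim := Cardinal.isSuccLimit_ord hunc.le
  refine ⟨fun x hx => hx.2, ?_, ?_⟩
  · intro γ hγ
    have hm : max γ β < lam.ord := max_lt hγ hβ
    have h1 : max γ β < max γ β + 1 := by
      rw [Ordinal.add_one_eq_succ]; exact Order.lt_succ _
    have h2 : max γ β + 1 < lam.ord := by
      rw [Ordinal.add_one_eq_succ]; exact hlim.succ_lt hm
    exact ⟨max γ β + 1, ⟨(le_max_right _ _).trans_lt h1, h2⟩, (le_max_left _ _).trans_lt h1⟩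
  · intro δ hδ hδ0 hlp
    obtain ⟨γ, hγC, _, hγδ⟩ := hlp 0 (pos_iff_ne_zero.mpr hδ0)
    exact ⟨hγC.1.trans hγδ, hδ⟩


/-- Claim 1.10.2(2). -/
theorem stmt10 (lam : Cardinal.{0}) (hreg : lam.IsRegular) (hunc : ℵ₀ < lam)
    (F : Set LocalFilter) (hF : IsLFS lam F)
    (H : Set (Set LocalFilter)) (hH : H ⊆ Qstar lam F)
    (hdir : ∀ p ∈ H, ∀ q ∈ H, ∃ r ∈ H, fil lam p ⊆ fil lam r ∧ fil lam q ⊆ fil lam r)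
    (hult : IsUltraOn (filH lam H) (Set.Iio lam.ord))
    (d : Ordinal.{0} → Ordinal.{0}) (hd : IncrCont lam d) (hd0 : d 0 = 0)
    (hclub : ∀ C, IsClub lam C →
      (⋃ ξ ∈ C, Set.Ico (d ξ) (d (ξ + 1))) ∈ filH lam H) :
    ∀ A ⊆ Set.Iio lam.ord, ∃ p ∈ H, ∃ C, IsClub lam C ∧
      ({ξ | ξ ∈ C ∧ ∃ t ∈ p, Set.Ico (d ξ) (d (ξ + 1)) ∩ t.Z ∈ posOf t.F t.Z} ⊆ A ∨
       {ξ | ξ ∈ C ∧ ∃ t ∈ p, Set.Ico (d ξ) (d (ξ + 1)) ∩ t.Z ∈ posOf t.F t.Z} ⊆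
         Set.Iio lam.ord \ A) := by

  intro A hA
  have hlim := Cardinal.isSuccLimit_ord hunc.le
  have hled := aux_le_d hd
  have hsucc : ∀ ξ, ξ < lam.ord → ξ + 1 < lam.ord := by
    intro ξ h; rw [Ordinal.add_one_eq_succ]; exact hlim.succ_lt h
  set B : Set Ordinal.{0} := ⋃ ξ ∈ A, Set.Ico (d ξ) (d (ξ + 1)) with hBdef
  have hB : B ⊆ Set.Iio lam.ord := by
    intro x hx
    obtain ⟨ξ, hξ, hxξ⟩ := Set.mem_iUnion₂.mp hx
    exact hxξ.2.trans (hd.1 _ (hsucc ξ (hA hξ)))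
  rcases hult.2 B hB with hmem | hmem
  · obtain ⟨p, hpH, hBsub, ε, hε, hεp⟩ := hmem
    obtain ⟨β, hβ, hbad⟩ := aux_bad hreg hunc hF (hH hpH) hε
    refine ⟨p, hpH, Set.Ioo β lam.ord, aux_club hunc hβ, Or.inl ?_⟩
    rintro ξ ⟨hξC, t, htp, hpos⟩
    by_cases hta : ε ≤ t.a
    · obtain ⟨x, hx⟩ := hpos.2 _ (hεp t htp hta)
      obtain ⟨η, hη, hxη⟩ := Set.mem_iUnion₂.mp hx.2.1
      have := aux_inj hd hξC.2 (hA hη) hx.1.1 hxη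
      rwa [this]
    · exfalso
      have hZ : t.Z ∈ t.F := (hF.1 t ((hH hpH).1 htp)).2.2.2.2.1
      obtain ⟨x, hx⟩ := hpos.2 _ hZ
      have h1 : x < β := hbad t htp (lt_of_not_ge hta) hx.2
      have h2 : β < x := hξC.1.trans_le ((hled ξ hξC.2).trans hx.1.1.1)
      exact absurd (h1.trans h2) (lt_irrefl x)
  · obtain ⟨p, hpH, hBsub, ε, hε, hεp⟩ := hmem
    obtain ⟨β, hβ, hbad⟩ := aux_bad hreg hunc hF (hH hpH) hε
    refine ⟨p, hpH, Set.Ioo β lam.ord, aux_club hunc hβ, Or.inr ?_⟩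
    rintro ξ ⟨hξC, t, htp, hpos⟩
    by_cases hta : ε ≤ t.a
    · obtain ⟨x, hx⟩ := hpos.2 _ (hεp t htp hta)
      refine ⟨hξC.2, fun hξA => hx.2.1.2 (Set.mem_biUnion hξA hx.1.1)⟩
    · exfalso
      have hZ : t.Z ∈ t.F := (hF.1 t ((hH hpH).1 htp)).2.2.2.2.1
      obtain ⟨x, hx⟩ := hpos.2 _ hZ
      have h1 : x < β := hbad t htp (lt_of_not_ge hta) hx.2
      have h2 : β < x := hξC.1.trans_le ((hled ξ hξC.2).trans hx.1.1.1)
      exact absurd (h1.trans h2) (lt_irrefl x)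

end

end RS889
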